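/- arXiv:2010.02916 — 3 statements merged into one kernel-verified Lean document; each statement's English description precedes it below -/
import Mathlib

section
/- Let g : ℝ^d → ℝ be twice differentiable and f(w) := g(w/‖w‖) for w ≠ 0. Then for any v with ⟨v, w⟩ = 0, v^⊤ ∇²f(w) v = (1/‖w‖²)(v^⊤ ∇²g(w̄) v − ⟨∇g(w̄), w̄⟩ ‖v‖²), where w̄ = w/‖w‖. -/
open ContinuousLinearMap

section aux

variable {E : Type*} [NormedAddCommGroup E] [InnerProductSpace ℝ E]

theorem aux_hasFDerivAt_norm {x : E} (hx : x ≠ 0) :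
    HasFDerivAt (fun y : E => ‖y‖) (‖x‖⁻¹ • innerSL ℝ x) x := by
  have hx' : ‖x‖ ≠ 0 := norm_ne_zero_iff.2 hx
  have h1 : HasFDerivAt (fun y : E => ‖y‖ ^ 2) (2 • innerSL ℝ x) x :=
    (hasStrictFDerivAt_norm_sq x).hasFDerivAt
  have h2 := (Real.hasDerivAt_sqrt (pow_ne_zero 2 hx')).comp_hasFDerivAt x h1
  have h3 : HasFDerivAt (fun y : E => ‖y‖)
      ((1 / (2 * Real.sqrt (‖x‖ ^ 2))) • (2 • innerSL ℝ x)) x :=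
    h2.congr_of_eventuallyEq (Filter.Eventually.of_forall fun y => by
      simp [Function.comp, Real.sqrt_sq (norm_nonneg y)])
  rw [Real.sqrt_sq (norm_nonneg x)] at h3
  convert h3 using 1
  ext y
  simp only [ContinuousLinearMap.smul_apply, two_smul, ContinuousLinearMap.add_apply,
    smul_eq_mul]
  field_simp
  ring

theorem aux_hasFDerivAt_invnorm {x : E} (hx : x ≠ 0) :
    HasFDerivAt (fun y : E => ‖y‖⁻¹) ((-(‖x‖ ^ 3)⁻¹) • innerSL ℝ x) x := by
  have hx' : ‖x‖ ≠ 0 := norm_ne_zero_iff.2 hx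
  have h := (hasDerivAt_inv hx').comp_hasFDerivAt x (aux_hasFDerivAt_norm hx)
  have h2 : HasFDerivAt (fun y : E => ‖y‖⁻¹)
      ((-(‖x‖ ^ 2)⁻¹) • (‖x‖⁻¹ • innerSL ℝ x)) x :=
    h.congr_of_eventuallyEq (Filter.Eventually.of_forall fun y => rfl)
  have hc : (-(‖x‖ ^ 2)⁻¹) * ‖x‖⁻¹ = -(‖x‖ ^ 3)⁻¹ := by
    field_simp
  rw [smul_smul, hc] at h2
  exact h2

end aux

theorem stmt16 {d : ℕ} (g : EuclideanSpace ℝ (Fin d) → ℝ) (hg : ContDiff ℝ 2 g)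
    (w v : EuclideanSpace ℝ (Fin d)) (hw : w ≠ 0) (hvw : (inner ℝ v w : ℝ) = 0) :
    let f : EuclideanSpace ℝ (Fin d) → ℝ := fun x => g (‖x‖⁻¹ • x)
    let wbar : EuclideanSpace ℝ (Fin d) := ‖w‖⁻¹ • w
    fderiv ℝ (fderiv ℝ f) w v v =
      (1 / ‖w‖ ^ 2) *
        (fderiv ℝ (fderiv ℝ g) wbar v v - fderiv ℝ g wbar wbar * ‖v‖ ^ 2) := by
  intro f wbar
  have hw' : ‖w‖ ≠ 0 := norm_ne_zero_iff.2 hw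
  have hwv : (inner ℝ w v : ℝ) = 0 := by rw [real_inner_comm]; exact hvw
  have hgd : Differentiable ℝ g := hg.differentiable two_ne_zero
  -- derivative of the normalization map
  set Nd : EuclideanSpace ℝ (Fin d) → (EuclideanSpace ℝ (Fin d) →L[ℝ] EuclideanSpace ℝ (Fin d)) :=
    fun x => ‖x‖⁻¹ • ContinuousLinearMap.id ℝ (EuclideanSpace ℝ (Fin d)) +
      ((-(‖x‖ ^ 3)⁻¹) • innerSL ℝ x).smulRight x with hNd
  have hN : ∀ x : EuclideanSpace ℝ (Fin d), x ≠ 0 →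
      HasFDerivAt (fun y : EuclideanSpace ℝ (Fin d) => ‖y‖⁻¹ • y) (Nd x) x := fun x hx =>
    (aux_hasFDerivAt_invnorm hx).smul (hasFDerivAt_id x)
  have hNdv : ∀ x : EuclideanSpace ℝ (Fin d),
      Nd x v = ‖x‖⁻¹ • v + ((-(‖x‖ ^ 3)⁻¹) * (inner ℝ x v : ℝ)) • x := by
    intro x
    simp [hNd]
  set u : EuclideanSpace ℝ (Fin d) → EuclideanSpace ℝ (Fin d) :=
    fun x => ‖x‖⁻¹ • v + ((-(‖x‖ ^ 3)⁻¹) * (inner ℝ x v : ℝ)) • x with hu_def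
  set A : EuclideanSpace ℝ (Fin d) → (EuclideanSpace ℝ (Fin d) →L[ℝ] ℝ) :=
    fun x => fderiv ℝ g (‖x‖⁻¹ • x) with hA_def
  have hf' : ∀ x : EuclideanSpace ℝ (Fin d), x ≠ 0 →
      HasFDerivAt f ((A x).comp (Nd x)) x := by
    intro x hx
    have h2 : HasFDerivAt (g ∘ fun y : EuclideanSpace ℝ (Fin d) => ‖y‖⁻¹ • y)
        ((fderiv ℝ g (‖x‖⁻¹ • x)).comp (Nd x)) x :=
      (hgd _).hasFDerivAt.comp x (hN x hx)
    exact h2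
  have heq : (fun x => fderiv ℝ f x v) =ᶠ[nhds w] fun x => A x (u x) := by
    filter_upwards [eventually_ne_nhds hw] with x hx
    rw [(hf' x hx).fderiv]
    simp only [ContinuousLinearMap.comp_apply, hNdv x]
    rfl
  -- derivative of A at w
  have hA : HasFDerivAt A ((fderiv ℝ (fderiv ℝ g) wbar).comp (Nd w)) w := by
    have hg1 : ContDiff ℝ 1 (fderiv ℝ g) := hg.fderiv_right (by norm_num)
    have h2 : HasFDerivAt (fderiv ℝ g) (fderiv ℝ (fderiv ℝ g) wbar) wbar :=
      (hg1.differentiable one_ne_zero wbar).hasFDerivAt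
    exact h2.comp w (hN w hw)
  -- derivative of u at w
  have hinner : HasFDerivAt (fun x : EuclideanSpace ℝ (Fin d) => (inner ℝ x v : ℝ))
      (innerSL ℝ v) w := by
    have he : (fun x : EuclideanSpace ℝ (Fin d) => (inner ℝ x v : ℝ)) =
        fun x : EuclideanSpace ℝ (Fin d) => (innerSL ℝ v) x := by
      funext x
      exact (real_inner_comm x v).symm
    rw [he]
    exact (innerSL ℝ v).hasFDerivAt
  have hsd : DifferentiableAt ℝ (fun x : EuclideanSpace ℝ (Fin d) => -(‖x‖ ^ 3)⁻¹) w := by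
    have h1 : DifferentiableAt ℝ (fun x : EuclideanSpace ℝ (Fin d) => ‖x‖) w :=
      (aux_hasFDerivAt_norm hw).differentiableAt
    exact ((h1.pow 3).inv (pow_ne_zero 3 hw')).neg
  set S : EuclideanSpace ℝ (Fin d) →L[ℝ] ℝ :=
    fderiv ℝ (fun x : EuclideanSpace ℝ (Fin d) => -(‖x‖ ^ 3)⁻¹) w with hS
  have hs : HasFDerivAt (fun x : EuclideanSpace ℝ (Fin d) => -(‖x‖ ^ 3)⁻¹) S w := hsd.hasFDerivAt
  have hc2 : HasFDerivAt (fun x : EuclideanSpace ℝ (Fin d) => (-(‖x‖ ^ 3)⁻¹) * (inner ℝ x v : ℝ))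
      ((-(‖w‖ ^ 3)⁻¹) • innerSL ℝ v + (inner ℝ w v : ℝ) • S) w := hs.mul hinner
  have hu1 : HasFDerivAt (fun x : EuclideanSpace ℝ (Fin d) => ‖x‖⁻¹ • v)
      (((-(‖w‖ ^ 3)⁻¹) • innerSL ℝ w).smulRight v) w :=
    (aux_hasFDerivAt_invnorm hw).smul_const v
  have hu2 : HasFDerivAt
      (fun x : EuclideanSpace ℝ (Fin d) => ((-(‖x‖ ^ 3)⁻¹) * (inner ℝ x v : ℝ)) • x)
      (((-(‖w‖ ^ 3)⁻¹) * (inner ℝ w v : ℝ)) • ContinuousLinearMap.id ℝ (EuclideanSpace ℝ (Fin d)) +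
        ((-(‖w‖ ^ 3)⁻¹) • innerSL ℝ v + (inner ℝ w v : ℝ) • S).smulRight w) w :=
    hc2.smul (hasFDerivAt_id w)
  have hu : HasFDerivAt u
      ((((-(‖w‖ ^ 3)⁻¹) • innerSL ℝ w).smulRight v) +
        (((-(‖w‖ ^ 3)⁻¹) * (inner ℝ w v : ℝ)) • ContinuousLinearMap.id ℝ (EuclideanSpace ℝ (Fin d)) +
          ((-(‖w‖ ^ 3)⁻¹) • innerSL ℝ v + (inner ℝ w v : ℝ) • S).smulRight w)) w :=
    hu1.add hu2
  have hφ := hA.clm_apply hu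
  -- f is C² at w, so fderiv f is differentiable at w
  have hfd : DifferentiableAt ℝ (fderiv ℝ f) w := by
    have hNsmooth : ContDiffAt ℝ 2 (fun y : EuclideanSpace ℝ (Fin d) => ‖y‖⁻¹ • y) w :=
      ((contDiffAt_norm ℝ hw).inv hw').smul contDiffAt_id
    have hfC2 : ContDiffAt ℝ 2 f w := hg.contDiffAt.comp w hNsmooth
    exact (hfC2.fderiv_right (m := 1) (by norm_num)).differentiableAt one_ne_zero
  have hΦ := hfd.hasFDerivAt.clm_apply (hasFDerivAt_const v w)
  have hΦ' := hφ.congr_of_eventuallyEq heq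
  have key := hΦ.unique hΦ'
  have key2 := DFunLike.congr_fun key v
  simp only [ContinuousLinearMap.add_apply, ContinuousLinearMap.comp_apply,
    ContinuousLinearMap.flip_apply, ContinuousLinearMap.zero_apply,
    ContinuousLinearMap.smul_apply, ContinuousLinearMap.smulRight_apply,
    ContinuousLinearMap.id_apply, innerSL_apply_apply, hwv,
    fderiv_const, Pi.zero_apply, map_zero] at key2
  rw [real_inner_self_eq_norm_sq v] at key2
  simp only [smul_zero, zero_smul, mul_zero, zero_add, add_zero, zero_mul, smul_eq_mul] at key2
  have hNv : Nd w v = ‖w‖⁻¹ • v := by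
    rw [hNdv w, hwv]
    simp
  have huw : u w = ‖w‖⁻¹ • v := by
    simp only [hu_def, hwv, mul_zero, zero_smul, add_zero]
  rw [hNv, huw] at key2
  rw [key2]
  have hArw : A w = fderiv ℝ g wbar := rfl
  have hww : (‖w‖ : ℝ) • wbar = w := by
    show (‖w‖ : ℝ) • (‖w‖⁻¹ • w) = w
    rw [smul_smul, mul_inv_cancel₀ hw', one_smul]
  have hgw : fderiv ℝ g wbar w = ‖w‖ * fderiv ℝ g wbar wbar := by
    conv_lhs => rw [← hww]
    rw [map_smul, smul_eq_mul]
  have hd2 : fderiv ℝ (fderiv ℝ g) wbar (‖w‖⁻¹ • v) (‖w‖⁻¹ • v) =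
      ‖w‖⁻¹ * (‖w‖⁻¹ * (fderiv ℝ (fderiv ℝ g) wbar v v)) := by
    rw [map_smul]
    simp [map_smul]
  rw [hArw, map_smul, smul_eq_mul, hgw, hd2]
  field_simp
  ring
end

section
/- Let g : ℝ^d → ℝ be twice differentiable, w ∈ ℝ^d \ {0}, v ⊥ w, and define h(λ) = g((w + λ‖w‖v)/‖w + λ‖w‖v‖). Then the second-order Taylor expansion at λ = 0 is h(λ) = g(w̄) + λ⟨∇g(w̄), v⟩ + (λ²/2)(v^⊤∇²g(w̄)v − ‖v‖²⟨∇g(w̄), w̄⟩) + o(λ²), where w̄ = w/‖w‖. -/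
open Asymptotics

lemma taylor2_aux {f f' : ℝ → ℝ} {A : ℝ}
    (hf : ∀ l : ℝ, HasDerivAt f (f' l) l)
    (hf' : HasDerivAt f' A 0) :
    (fun l : ℝ => f l - (f 0 + l * f' 0 + l ^ 2 / 2 * A)) =o[nhds 0] fun l : ℝ => l ^ 2 := by
  set F : ℝ → ℝ := fun l => f l - (f 0 + l * f' 0 + l ^ 2 / 2 * A) with hF
  have hFd : ∀ l : ℝ, HasDerivAt F (f' l - (f' 0 + l * A)) l := by
    intro l
    have h1 : HasDerivAt (fun l : ℝ => f 0 + l * f' 0 + l ^ 2 / 2 * A)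
        (f' 0 + l * A) l := by
      have := (((hasDerivAt_const l (f 0)).add
          ((hasDerivAt_id l).mul_const (f' 0))).add
          ((((hasDerivAt_id l).pow 2).div_const 2).mul_const A))
      convert this using 1
      any_goals rfl
      all_goals simp <;> ring
    exact (hf l).sub h1
  have hlo : (fun l : ℝ => f' l - (f' 0 + l * A)) =o[nhds 0] fun l : ℝ => l := by
    have := hf'.isLittleO
    simp only [sub_zero, smul_eq_mul] at this
    refine this.congr' ?_ (by rfl)
    filter_upwards with l; ring
  rw [isLittleO_iff]
  intro ε hε
  rw [isLittleO_iff] at hlo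
  have hev := hlo (half_pos hε)
  rw [Metric.eventually_nhds_iff] at hev ⊢
  obtain ⟨δ, hδ, hb⟩ := hev
  refine ⟨δ, hδ, fun {l} hl => ?_⟩
  simp only [Real.dist_eq, sub_zero] at hl
  have hseg : ∀ x ∈ segment ℝ (0:ℝ) l, |x| ≤ |l| := by
    intro x hx
    rw [segment_eq_uIcc, Set.mem_uIcc] at hx
    rcases hx with ⟨h1, h2⟩ | ⟨h1, h2⟩
    · simpa using abs_le_max_abs_abs h1 h2
    · simpa [max_comm] using abs_le_max_abs_abs h1 h2
  have key : ‖F l - F 0‖ ≤ (ε / 2 * |l|) * ‖l - 0‖ := by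
    apply Convex.norm_image_sub_le_of_norm_hasDerivWithin_le
      (f' := fun x => f' x - (f' 0 + x * A))
      (fun x hx => (hFd x).hasDerivWithinAt) ?_ (convex_segment 0 l)
      (left_mem_segment ℝ 0 l) (right_mem_segment ℝ 0 l)
    intro x hx
    have hxl := hseg x hx
    have : ‖f' x - (f' 0 + x * A)‖ ≤ ε / 2 * ‖x‖ := by
      apply hb
      simp only [Real.dist_eq, sub_zero]
      exact lt_of_le_of_lt hxl hl
    refine this.trans ?_
    have : (0:ℝ) ≤ ε / 2 := (half_pos hε).le
    calc ε / 2 * ‖x‖ = ε / 2 * |x| := by rw [Real.norm_eq_abs]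
      _ ≤ ε / 2 * |l| := by nlinarith
  have hF0 : F 0 = 0 := by simp [hF]
  rw [hF0, sub_zero] at key
  calc ‖F l‖ ≤ (ε / 2 * |l|) * ‖l - 0‖ := key
    _ = ε / 2 * (|l| * |l|) := by rw [sub_zero, Real.norm_eq_abs]; ring
    _ ≤ ε * ‖l ^ 2‖ := by
        rw [← abs_mul, ← sq, Real.norm_eq_abs]
        nlinarith [abs_nonneg (l ^ 2), sq_abs l, abs_nonneg l]

theorem stmt17 {d : ℕ} (g : EuclideanSpace ℝ (Fin d) → ℝ) (hg : ContDiff ℝ 2 g)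
    (w v : EuclideanSpace ℝ (Fin d)) (hw : w ≠ 0) (hvw : (inner ℝ v w : ℝ) = 0) :
    let wbar : EuclideanSpace ℝ (Fin d) := ‖w‖⁻¹ • w
    let h : ℝ → ℝ := fun l => g (‖w + (l * ‖w‖) • v‖⁻¹ • (w + (l * ‖w‖) • v))
    (fun l : ℝ => h l - (g wbar + l * (inner ℝ (gradient g wbar) v : ℝ) +
        l ^ 2 / 2 * (fderiv ℝ (fderiv ℝ g) wbar v v -
          ‖v‖ ^ 2 * (inner ℝ (gradient g wbar) wbar : ℝ))))
      =o[nhds 0] fun l : ℝ => l ^ 2 := by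
  intro wbar h
  have hwbarr : wbar = ‖w‖⁻¹ • w := rfl
  have hnw : ‖w‖ ≠ 0 := norm_ne_zero_iff.mpr hw
  set a : ℝ := ‖v‖ ^ 2 with ha
  set q : ℝ → ℝ := fun l => 1 + a * l ^ 2 with hqdef
  have hqpos : ∀ l : ℝ, 0 < q l := by
    intro l; simp only [hqdef]; positivity
  have hqne : ∀ l : ℝ, q l ≠ 0 := fun l => (hqpos l).ne'
  have hsqne : ∀ l : ℝ, Real.sqrt (q l) ≠ 0 := fun l =>
    (Real.sqrt_pos.mpr (hqpos l)).ne'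
  set s : ℝ → ℝ := fun l => (Real.sqrt (q l))⁻¹ with hsdef
  set ψ : ℝ → EuclideanSpace ℝ (Fin d) := fun l => s l • (wbar + l • v) with hψdef
  have hwbar1 : ‖wbar‖ = 1 := by
    rw [hwbarr, norm_smul, norm_inv, norm_norm]
    exact inv_mul_cancel₀ hnw
  have hkey : ∀ l : ℝ, ‖w + (l * ‖w‖) • v‖⁻¹ • (w + (l * ‖w‖) • v) = ψ l := by
    intro l
    have h1 : w + (l * ‖w‖) • v = ‖w‖ • (wbar + l • v) := by
      rw [hwbarr, smul_add, smul_smul, mul_inv_cancel₀ hnw, one_smul, smul_smul,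
        mul_comm]
    have hinner : (inner ℝ wbar (l • v) : ℝ) = 0 := by
      rw [hwbarr, inner_smul_left, inner_smul_right]
      rw [real_inner_comm]
      simp [hvw]
    have h2 : ‖wbar + l • v‖ = Real.sqrt (q l) := by
      rw [← Real.sqrt_sq (norm_nonneg (wbar + l • v))]
      congr 1
      rw [norm_add_sq_real, hinner, hwbar1]
      simp only [hqdef, norm_smul, Real.norm_eq_abs, mul_pow, sq_abs]
      ring
    rw [h1, norm_smul, Real.norm_eq_abs, abs_of_nonneg (norm_nonneg w), h2,
      smul_smul]
    show _ = s l • (wbar + l • v)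
    congr 1
    simp only [hsdef]
    rw [mul_inv]
    field_simp [hnw, hsqne l]
    try ring
  have hh : h = fun l => g (ψ l) := by
    funext l; exact congrArg g (hkey l)
  set s' : ℝ → ℝ := fun l => (-a * l) * ((Real.sqrt (q l)) ^ 3)⁻¹ with hs'def
  have hqd : ∀ l : ℝ, HasDerivAt q (a * (2 * l)) l := by
    intro l
    have := ((((hasDerivAt_id l).pow 2).const_mul a).const_add 1)
    convert this using 1
    any_goals rfl
    simp
  have hcube : ∀ l : ℝ, Real.sqrt (q l) ^ 3 = q l * Real.sqrt (q l) := by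
    intro l
    rw [pow_succ, Real.sq_sqrt (hqpos l).le]
  have hsd : ∀ l : ℝ, HasDerivAt s (s' l) l := by
    intro l
    have h1 := ((hqd l).sqrt (hqne l)).inv (hsqne l)
    convert h1 using 1
    any_goals rfl
    rw [hs'def]
    simp only
    rw [hcube l, Real.sq_sqrt (hqpos l).le]
    field_simp [hqne l, hsqne l]
  set ψ' : ℝ → EuclideanSpace ℝ (Fin d) := fun l => s' l • (wbar + l • v) + s l • v
    with hψ'def
  have hψd : ∀ l : ℝ, HasDerivAt ψ (ψ' l) l := by
    intro l
    have := (hsd l).smul (((hasDerivAt_id l).smul_const v).const_add wbar)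
    convert this using 1
    any_goals rfl
    simp only [hψ'def, id_eq, one_smul]
    abel
  have hq0 : q 0 = 1 := by simp [hqdef]
  have hs0 : s 0 = 1 := by simp [hsdef, hq0]
  have hs'0 : s' 0 = 0 := by simp [hs'def]
  have hψ0 : ψ 0 = wbar := by
    simp [hψdef, hs0]
  have hψ'0 : ψ' 0 = v := by
    simp [hψ'def, hs'0, hs0]
  have hψ'd : HasDerivAt ψ' ((-a) • wbar) 0 := by
    have hc := (((hqd 0).sqrt (hqne 0)).pow 3).inv (pow_ne_zero 3 (hsqne 0))
    have hs'd : HasDerivAt s' (-a) 0 := by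
      have h1 := (((hasDerivAt_id (0:ℝ)).const_mul (-a)).mul hc)
      convert h1 using 1
      any_goals rfl
      simp [hq0]
    have h2 := (hs'd.smul (((hasDerivAt_id (0:ℝ)).smul_const v).const_add wbar)).add
      ((hsd 0).smul_const v)
    convert h2 using 1
    any_goals rfl
    simp [hs'0]
  have hgd : Differentiable ℝ g := hg.differentiable (by norm_num)
  have hGc : ContDiff ℝ 1 (fderiv ℝ g) := hg.fderiv_right (by norm_num)
  have hGd : Differentiable ℝ (fderiv ℝ g) := hGc.differentiable (by norm_num)
  set h' : ℝ → ℝ := fun l => fderiv ℝ g (ψ l) (ψ' l) with hh'def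
  have hhd : ∀ l : ℝ, HasDerivAt h (h' l) l := by
    intro l
    rw [hh]
    exact (hgd (ψ l)).hasFDerivAt.comp_hasDerivAt l (hψd l)
  have hh'd : HasDerivAt h'
      (fderiv ℝ (fderiv ℝ g) wbar v v - a * fderiv ℝ g wbar wbar) 0 := by
    have hc : HasDerivAt (fun l : ℝ => fderiv ℝ g (ψ l))
        (fderiv ℝ (fderiv ℝ g) wbar v) 0 := by
      have h0 := (hGd (ψ 0)).hasFDerivAt.comp_hasDerivAt 0 (hψd 0)
      rwa [hψ0, hψ'0] at h0
    have := hc.clm_apply hψ'd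
    convert this using 1
    any_goals rfl
    rw [hψ'0, hψ0, hwbarr]
    simp only [map_smul, smul_eq_mul]
    ring
  have hgrad : ∀ x : EuclideanSpace ℝ (Fin d),
      (inner ℝ (gradient g wbar) x : ℝ) = fderiv ℝ g wbar x := by
    intro x
    exact InnerProductSpace.toDual_symm_apply
  have hmain := taylor2_aux hhd hh'd
  have hh0 : h 0 = g wbar := by
    simp only [hh]
    rw [hψ0]
  have hh'0 : h' 0 = fderiv ℝ g wbar v := by
    simp only [hh'def]
    rw [hψ0, hψ'0]
  refine hmain.congr' ?_ (by rfl)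
  filter_upwards with l
  rw [hh0, hh'0, hgrad v, hgrad wbar, ha]
end

section
/- In the AdamW update with ε = 0, constant schedule multiplier, and scale-invariant losses f_t: if two trajectories satisfy θ'_t = C θ_t for t ≤ T with learning rates α' = Cα and identical (λ, η, β₁, β₂), then since ∇f_t(Cθ) = (1/C)∇f_t(θ), the normalized update m̂_T/√(v̂_T) is identical for both trajectories and θ'_{T+1} = C θ_{T+1}; by induction the two trajectories coincide in function space. -/
lemma grad_scale_aux {d : ℕ} (f : (Fin d → ℝ) → ℝ)
    (hs : ∀ (x : Fin d → ℝ) (c : ℝ), 0 < c → f (c • x) = f x)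
    (x : Fin d → ℝ) (c : ℝ) (hc : 0 < c)
    (hd1 : DifferentiableAt ℝ f (c • x)) (w : Fin d → ℝ) :
    fderiv ℝ f (c • x) w = c⁻¹ * fderiv ℝ f x w := by
  have h1 : HasFDerivAt (fun y : Fin d → ℝ => c • y)
      (c • ContinuousLinearMap.id ℝ (Fin d → ℝ)) x :=
    (hasFDerivAt_id x).const_smul c
  have h2 : HasFDerivAt f (fderiv ℝ f (c • x)) (c • x) := hd1.hasFDerivAt
  have h3 : HasFDerivAt (f ∘ fun y : Fin d → ℝ => c • y)
      ((fderiv ℝ f (c • x)).comp (c • ContinuousLinearMap.id ℝ (Fin d → ℝ))) x :=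
    h2.comp x h1
  have heq : (f ∘ fun y : Fin d → ℝ => c • y) = f := funext fun y => hs y c hc
  rw [heq] at h3
  have h4 := h3.fderiv
  have h5 : fderiv ℝ f x w = c * fderiv ℝ f (c • x) w := by
    rw [h4]
    simp [ContinuousLinearMap.comp_apply, map_smul, smul_eq_mul]
  rw [h5]
  field_simp

theorem stmt19 {d : ℕ} (C α η lam β1 β2 : ℝ) (hC : 0 < C)
    (f : ℕ → (Fin d → ℝ) → ℝ)
    (hscale : ∀ (t : ℕ) (x : Fin d → ℝ) (c : ℝ), 0 < c → f t (c • x) = f t x)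
    (hdiff : ∀ (t : ℕ) (x : Fin d → ℝ), x ≠ 0 → DifferentiableAt ℝ (f t) x)
    (θ θ' m m' v v' : ℕ → Fin d → ℝ)
    (grad : ℕ → (Fin d → ℝ) → Fin d → ℝ)
    (hgrad : ∀ t x i, grad t x i = fderiv ℝ (f t) x (Pi.single i 1))
    (hθ0 : θ' 0 = C • θ 0) (hθne : ∀ t, θ t ≠ 0) (hθ'ne : ∀ t, θ' t ≠ 0)
    (hm0 : m 0 = 0) (hm'0 : m' 0 = 0) (hv0 : v 0 = 0) (hv'0 : v' 0 = 0)
    (hm : ∀ t, m (t + 1) = β1 • m t + (1 - β1) • grad (t + 1) (θ t))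
    (hv : ∀ t i, v (t + 1) i = β2 * v t i + (1 - β2) * (grad (t + 1) (θ t) i) ^ 2)
    (hθ : ∀ t, θ (t + 1) = θ t - η • (α • (fun i =>
        (m (t + 1) i / (1 - β1 ^ (t + 1))) /
          Real.sqrt (v (t + 1) i / (1 - β2 ^ (t + 1)))) + lam • θ t))
    (hm' : ∀ t, m' (t + 1) = β1 • m' t + (1 - β1) • grad (t + 1) (θ' t))
    (hv' : ∀ t i, v' (t + 1) i = β2 * v' t i + (1 - β2) * (grad (t + 1) (θ' t) i) ^ 2)
    (hθ' : ∀ t, θ' (t + 1) = θ' t - η • ((C * α) • (fun i =>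
        (m' (t + 1) i / (1 - β1 ^ (t + 1))) /
          Real.sqrt (v' (t + 1) i / (1 - β2 ^ (t + 1)))) + lam • θ' t))
    (hvne : ∀ t i, v (t + 1) i / (1 - β2 ^ (t + 1)) ≠ 0)
    (hv'ne : ∀ t i, v' (t + 1) i / (1 - β2 ^ (t + 1)) ≠ 0) :
    (∀ t i, (m' (t + 1) i / (1 - β1 ^ (t + 1))) /
        Real.sqrt (v' (t + 1) i / (1 - β2 ^ (t + 1))) =
      (m (t + 1) i / (1 - β1 ^ (t + 1))) /
        Real.sqrt (v (t + 1) i / (1 - β2 ^ (t + 1)))) ∧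
    ∀ t, θ' t = C • θ t := by
  have hCne : C ≠ 0 := ne_of_gt hC
  -- gradient scaling
  have hgs : ∀ t (x : Fin d → ℝ), x ≠ 0 → ∀ i,
      grad t (C • x) i = C⁻¹ * grad t x i := by
    intro t x hx i
    have hCx : C • x ≠ 0 := smul_ne_zero hCne hx
    rw [hgrad, hgrad]
    exact grad_scale_aux (f t) (fun y c hc => hscale t y c hc) x C hC
      (hdiff t (C • x) hCx) _
  -- main induction: the full invariant
  have key : ∀ t, θ' t = C • θ t ∧ m' t = C⁻¹ • m t ∧
      (∀ i, v' t i = C⁻¹ ^ 2 * v t i) := by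
    intro t
    induction t with
    | zero =>
      refine ⟨hθ0, ?_, ?_⟩
      · rw [hm0, hm'0, smul_zero]
      · intro i; rw [hv0, hv'0]; simp
    | succ n ih =>
      obtain ⟨ihθ, ihm, ihv⟩ := ih
      have hg : ∀ i, grad (n + 1) (θ' n) i = C⁻¹ * grad (n + 1) (θ n) i := by
        intro i
        rw [ihθ]
        exact hgs (n + 1) (θ n) (hθne n) i
      have hmstep : m' (n + 1) = C⁻¹ • m (n + 1) := by
        funext i
        rw [hm', hm, ihm]
        simp only [Pi.add_apply, Pi.smul_apply, smul_eq_mul, hg i]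
        ring
      have hvstep : ∀ i, v' (n + 1) i = C⁻¹ ^ 2 * v (n + 1) i := by
        intro i
        rw [hv', hv, ihv i, hg i]
        ring
      -- equality of normalized updates
      have hupd : ∀ i, (m' (n + 1) i / (1 - β1 ^ (n + 1))) /
          Real.sqrt (v' (n + 1) i / (1 - β2 ^ (n + 1))) =
          (m (n + 1) i / (1 - β1 ^ (n + 1))) /
          Real.sqrt (v (n + 1) i / (1 - β2 ^ (n + 1))) := by
        intro i
        have hsq : Real.sqrt (v' (n + 1) i / (1 - β2 ^ (n + 1))) =
            C⁻¹ * Real.sqrt (v (n + 1) i / (1 - β2 ^ (n + 1))) := by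
          rw [hvstep i]
          have : C⁻¹ ^ 2 * v (n + 1) i / (1 - β2 ^ (n + 1)) =
              C⁻¹ ^ 2 * (v (n + 1) i / (1 - β2 ^ (n + 1))) := by ring
          rw [this, Real.sqrt_mul (by positivity),
            Real.sqrt_sq (le_of_lt (inv_pos.mpr hC))]
        rw [hsq, hmstep]
        simp only [Pi.smul_apply, smul_eq_mul]
        rw [mul_div_assoc, mul_div_mul_left _ _ (inv_ne_zero hCne)]
      refine ⟨?_, hmstep, hvstep⟩
      funext i
      rw [hθ', hθ]
      simp only [Pi.sub_apply, Pi.add_apply, Pi.smul_apply, smul_eq_mul,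
        ihθ, hupd i]
      ring
  have hupd_all : ∀ t i, (m' (t + 1) i / (1 - β1 ^ (t + 1))) /
      Real.sqrt (v' (t + 1) i / (1 - β2 ^ (t + 1))) =
      (m (t + 1) i / (1 - β1 ^ (t + 1))) /
      Real.sqrt (v (t + 1) i / (1 - β2 ^ (t + 1))) := by
    intro n i
    obtain ⟨ihθ, ihm, ihv⟩ := key n
    have hg : ∀ i, grad (n + 1) (θ' n) i = C⁻¹ * grad (n + 1) (θ n) i := by
      intro i
      rw [ihθ]
      exact hgs (n + 1) (θ n) (hθne n) i
    have hmstep : m' (n + 1) = C⁻¹ • m (n + 1) := by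
      funext i
      rw [hm', hm, ihm]
      simp only [Pi.add_apply, Pi.smul_apply, smul_eq_mul, hg i]
      ring
    have hvstep : v' (n + 1) i = C⁻¹ ^ 2 * v (n + 1) i := by
      rw [hv', hv, ihv i, hg i]
      ring
    have hsq : Real.sqrt (v' (n + 1) i / (1 - β2 ^ (n + 1))) =
        C⁻¹ * Real.sqrt (v (n + 1) i / (1 - β2 ^ (n + 1))) := by
      rw [hvstep]
      have : C⁻¹ ^ 2 * v (n + 1) i / (1 - β2 ^ (n + 1)) =
          C⁻¹ ^ 2 * (v (n + 1) i / (1 - β2 ^ (n + 1))) := by ring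
      rw [this, Real.sqrt_mul (by positivity),
        Real.sqrt_sq (le_of_lt (inv_pos.mpr hC))]
    rw [hsq, hmstep]
    simp only [Pi.smul_apply, smul_eq_mul]
    rw [mul_div_assoc, mul_div_mul_left _ _ (inv_ne_zero hCne)]
  exact ⟨hupd_all, fun t => (key t).1⟩
end
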